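/- Let F : X → ℝ be a non-decreasing, differentiable, DR-submodular function on a compact rectangle X = ∏_{i=1}^n [ℓ_i, u_i]. Then for every x ∈ X, the pointwise infimum over support points equals F: inf_{x̂ ∈ X} F̃(x; x̂) = F(x), and the infimum is attained at x̂ = x. -/

import Mathlib

private lemma tangent_bound {n : ℕ} (ℓ u : Fin n → ℝ)
    (F : (Fin n → ℝ) → ℝ) (hdiff : Differentiable ℝ F)
    (hconc : ∀ (i : Fin n), ∀ x ∈ Set.Icc ℓ u,
      ConcaveOn ℝ {t : ℝ | x + Pi.single i t ∈ Set.Icc ℓ u}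
        (fun t : ℝ => F (x + Pi.single i t)))
    (xh : Fin n → ℝ) (hxh : xh ∈ Set.Icc ℓ u) (i : Fin n) (δ : ℝ) (hδ : 0 ≤ δ)
    (hmem : xh + Pi.single i δ ∈ Set.Icc ℓ u) :
    F (xh + Pi.single i δ) ≤ F xh + fderiv ℝ F xh (Pi.single i 1) * δ := by
  rcases eq_or_lt_of_le hδ with h0 | h0
  · simp [← h0]
  · have hc := hconc i xh hxh
    have hsingle : ∀ t : ℝ, (Pi.single i t : Fin n → ℝ) = t • (Pi.single i (1:ℝ) : Fin n → ℝ) := by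
      intro t; funext j; by_cases hj : j = i <;> simp [Pi.single_apply, hj]
    have hφ : HasDerivAt (fun t : ℝ => xh + Pi.single i t) (Pi.single i (1:ℝ)) 0 := by
      have : HasDerivAt (fun t : ℝ => xh + t • (Pi.single i (1:ℝ) : Fin n → ℝ))
          ((1:ℝ) • (Pi.single i (1:ℝ) : Fin n → ℝ)) 0 :=
        ((hasDerivAt_id (0:ℝ)).smul_const _).const_add xh
      have h2 : (fun t : ℝ => xh + (Pi.single i t : Fin n → ℝ))
          = fun t : ℝ => xh + t • (Pi.single i (1:ℝ) : Fin n → ℝ) := by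
        funext t; rw [hsingle]
      rw [h2]; simpa using this
    have hg : HasDerivAt (fun t : ℝ => F (xh + Pi.single i t))
        (fderiv ℝ F xh (Pi.single i 1)) 0 := by
      have := ((hdiff (xh + Pi.single i (0:ℝ))).hasFDerivAt).comp_hasDerivAt 0 hφ
      simpa [Function.comp_def] using this
    have h0mem : (0:ℝ) ∈ {t : ℝ | xh + Pi.single i t ∈ Set.Icc ℓ u} := by
      simpa using hxh
    have hslope := hc.slope_le_of_hasDerivAt h0mem hmem h0 hg
    rw [slope_def_field] at hslope
    have := (div_le_iff₀ h0).mp (by simpa using hslope)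
    linarith
    
/-- the pointwise infimum of the gradient-based estimators is a perfect
estimator. For a non-decreasing, differentiable, DR-submodular function `F` on the compact
rectangle `X = Icc ℓ u`, for every `x ∈ X`, `F x` is the least value of
`F̃(x; x̂) = F x̂ + ∑ i (∂F/∂x_i)(x̂) · [x_i − x̂_i]⁺` over support points `x̂ ∈ X`
(so the infimum equals `F x`), and the infimum is attained at `x̂ = x`
(i.e. `F̃(x; x) = F x`). -/
theorem stmt_5 {n : ℕ} (hn : 1 ≤ n) (ℓ u : Fin n → ℝ) (hlu : ∀ i, ℓ i < u i)
    (F : (Fin n → ℝ) → ℝ) (hdiff : Differentiable ℝ F)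
    (hsub : ∀ x ∈ Set.Icc ℓ u, ∀ y ∈ Set.Icc ℓ u, F (x ⊔ y) + F (x ⊓ y) ≤ F x + F y)
    (hconc : ∀ (i : Fin n), ∀ x ∈ Set.Icc ℓ u,
      ConcaveOn ℝ {t : ℝ | x + Pi.single i t ∈ Set.Icc ℓ u}
        (fun t : ℝ => F (x + Pi.single i t)))
    (hmono : ∀ x ∈ Set.Icc ℓ u, ∀ y ∈ Set.Icc ℓ u, x ≤ y → F x ≤ F y)
    (x : Fin n → ℝ) (hx : x ∈ Set.Icc ℓ u) :
    IsLeast {v : ℝ | ∃ xh ∈ Set.Icc ℓ u,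
        v = F xh + ∑ i : Fin n, fderiv ℝ F xh (Pi.single i 1) * max (x i - xh i) 0}
      (F x)
    ∧ F x + ∑ i : Fin n, fderiv ℝ F x (Pi.single i 1) * max (x i - x i) 0 = F x := by
  have hattain : F x + ∑ i : Fin n, fderiv ℝ F x (Pi.single i 1) * max (x i - x i) 0 = F x := by
    simp
  refine ⟨⟨⟨x, hx, hattain.symm⟩, ?_⟩, hattain⟩
  rintro v ⟨xh, hxh, rfl⟩
  -- z S : replace coordinates in S by the max with x
  set z : Finset (Fin n) → (Fin n → ℝ) :=
    fun S => fun j => if j ∈ S then max (x j) (xh j) else xh j with hz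
  have hzmem : ∀ S, z S ∈ Set.Icc ℓ u := by
    intro S
    constructor <;> intro j <;> by_cases hj : j ∈ S <;>
      simp [hz, hj, le_max_iff, max_le_iff, hx.1 j, hx.2 j, hxh.1 j, hxh.2 j]
  have key : ∀ S : Finset (Fin n),
      F (z S) ≤ F xh + ∑ i ∈ S, fderiv ℝ F xh (Pi.single i 1) * max (x i - xh i) 0 := by
    intro S
    induction S using Finset.induction with
    | empty => simp [hz]
    | @insert a S ha ih =>
      set δa := max (x a - xh a) 0 with hδa
      have hδa0 : 0 ≤ δa := le_max_right _ _
      have hpa : xh a + δa = max (x a) (xh a) := by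
        rcases le_total (x a) (xh a) with h | h <;> simp [hδa, h, max_eq_left, max_eq_right] <;>
          · rw [max_eq_left (by linarith)]; linarith
      have hpmem : xh + Pi.single a δa ∈ Set.Icc ℓ u := by
        constructor <;> intro j <;> by_cases hj : j = a
        · subst hj; simpa [hpa, le_max_iff] using Or.inr (hxh.1 j)
        · simp [Pi.single_apply, hj, hxh.1 j]
        · subst hj; simp only [Pi.add_apply, Pi.single_eq_same, hpa, max_le_iff]
          exact ⟨hx.2 j, hxh.2 j⟩
        · simp [Pi.single_apply, hj, hxh.2 j]
      have hsup : (xh + Pi.single a δa) ⊔ z S = z (insert a S) := by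
        funext j
        rcases eq_or_ne j a with rfl | hj
        · simp [hz, ha, hpa, max_comm]
        · by_cases hjS : j ∈ S <;>
            simp [hz, hj, hjS, Pi.single_apply, Finset.mem_insert, max_comm]
      have hinf : (xh + Pi.single a δa) ⊓ z S = xh := by
        funext j
        rcases eq_or_ne j a with rfl | hj
        · simp [hz, ha, hpa, min_comm]
        · by_cases hjS : j ∈ S <;> simp [hz, hj, hjS, Pi.single_apply, min_comm]
      have hsubm := hsub (xh + Pi.single a δa) hpmem (z S) (hzmem S)
      rw [hsup, hinf] at hsubm
      have htan := tangent_bound ℓ u F hdiff hconc xh hxh a δa hδa0 hpmem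
      rw [Finset.sum_insert ha]
      linarith [ih]
  have hxle : x ≤ z Finset.univ := by
    intro j; simp [hz, le_max_iff]
  have hfinal := key Finset.univ
  have hmx : F x ≤ F (z Finset.univ) := hmono x hx _ (hzmem _) hxle
  calc F x ≤ F (z Finset.univ) := hmx
    _ ≤ _ := hfinal
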